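/- Let T₁(y) = [(1−y⁴)·log(1+y²) + 2y⁴ − y² − 4y²·∫₁^y (log(1+x²)/x) dx] / (2y(1+y²)) and ΛT₁(y) = y·T₁'(y). Then as y → +∞: (i) ΛT₁(y) + y·log y = O((log y)²/y); (ii) ΛT₁(y) − T₁(y) + y = O((log y)²/y). -/

import Mathlib

open MeasureTheory Filter Topology Asymptotics

noncomputable section

/-- The explicit profile `T₁`. -/
def T1 (y : ℝ) : ℝ :=
  ((1 - y ^ 4) * Real.log (1 + y ^ 2) + 2 * y ^ 4 - y ^ 2
      - 4 * y ^ 2 * ∫ x in (1 : ℝ)..y, Real.log (1 + x ^ 2) / x)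
    / (2 * y * (1 + y ^ 2))

/-- The scaling derivative `ΛT₁(y) = y T₁'(y)`. -/
def LamT1 (y : ℝ) : ℝ := y * deriv T1 y

/-- auxiliary: the integral appearing in `T1`. -/
def Ii (y : ℝ) : ℝ := ∫ x in (1 : ℝ)..y, Real.log (1 + x ^ 2) / x

lemma contOn_f : ContinuousOn (fun x : ℝ => Real.log (1 + x ^ 2) / x) (Set.Ioi 0) := by
  apply ContinuousOn.div
  · exact ((continuous_const.add (continuous_pow 2)).log
      (fun x => (by positivity : (1:ℝ) + x ^ 2 ≠ 0))).continuousOn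
  · exact continuousOn_id
  · intro x hx
    exact ne_of_gt hx

lemma uIcc_subset_Ioi {y : ℝ} (hy : 0 < y) : Set.uIcc (1 : ℝ) y ⊆ Set.Ioi 0 := by
  intro x hx
  rcases Set.mem_uIcc.mp hx with ⟨h1, _⟩ | ⟨h1, _⟩ <;> simp only [Set.mem_Ioi] <;> linarith

lemma intInt_f {y : ℝ} (hy : 0 < y) :
    IntervalIntegrable (fun x : ℝ => Real.log (1 + x ^ 2) / x) volume 1 y :=
  (contOn_f.mono (uIcc_subset_Ioi hy)).intervalIntegrable

lemma hasDerivI {y : ℝ} (hy : 0 < y) : HasDerivAt Ii (Real.log (1 + y ^ 2) / y) y := by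
  apply intervalIntegral.integral_hasDerivAt_right (intInt_f hy)
  · exact contOn_f.stronglyMeasurableAtFilter isOpen_Ioi y hy
  · exact contOn_f.continuousAt (Ioi_mem_nhds hy)

lemma Ii_nonneg {y : ℝ} (hy : 1 ≤ y) : 0 ≤ Ii y := by
  apply intervalIntegral.integral_nonneg hy
  intro x hx
  have hx1 : 1 ≤ x := hx.1
  apply div_nonneg (Real.log_nonneg (by nlinarith)) (by linarith)

lemma Ii_le {y : ℝ} (hy : 1 ≤ y) : Ii y ≤ (Real.log y) ^ 2 + Real.log y := by
  have hint2 : IntervalIntegrable (fun x : ℝ => (2 * Real.log x + 1) / x) volume 1 y := by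
    apply ContinuousOn.intervalIntegrable
    apply ContinuousOn.mono _ (uIcc_subset_Ioi (by linarith))
    apply ContinuousOn.div
    · exact (continuousOn_const.mul (Real.continuousOn_log.mono
        (fun x hx => ne_of_gt hx))).add continuousOn_const
    · exact continuousOn_id
    · intro x hx; exact ne_of_gt hx
  have hmono : Ii y ≤ ∫ x in (1:ℝ)..y, (2 * Real.log x + 1) / x := by
    apply intervalIntegral.integral_mono_on hy (intInt_f (by linarith)) hint2
    intro x hx
    have hx1 : 1 ≤ x := hx.1
    have hx0 : 0 < x := by linarith
    have he : (2 : ℝ) < Real.exp 1 := by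
      have := Real.exp_one_gt_d9; linarith
    have h12 : 1 + x ^ 2 ≤ Real.exp 1 * x ^ 2 := by nlinarith
    have hlog : Real.log (1 + x ^ 2) ≤ 2 * Real.log x + 1 := by
      calc Real.log (1 + x ^ 2) ≤ Real.log (Real.exp 1 * x ^ 2) := by
            apply Real.log_le_log (by positivity) h12
        _ = 2 * Real.log x + 1 := by
            rw [Real.log_mul (Real.exp_ne_zero 1) (by positivity), Real.log_exp,
              Real.log_pow]
            push_cast; ring
    gcongr
  have hcalc : ∫ x in (1:ℝ)..y, (2 * Real.log x + 1) / x
      = (Real.log y) ^ 2 + Real.log y := by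
    have hder : ∀ x ∈ Set.uIcc (1:ℝ) y,
        HasDerivAt (fun t => Real.log t ^ 2 + Real.log t) ((2 * Real.log x + 1) / x) x := by
      intro x hx
      have hx0 : 0 < x := uIcc_subset_Ioi (by linarith) hx
      have hl := Real.hasDerivAt_log hx0.ne'
      have h2 := (hl.pow 2).add hl
      convert h2 using 1
      all_goals try rfl
      field_simp
      try ring
    rw [intervalIntegral.integral_eq_sub_of_hasDerivAt hder hint2]
    simp [Real.log_one]
  linarith

lemma hasDerivT1 {y : ℝ} (hy : 0 < y) :
    HasDerivAt T1
      ((-((y ^ 4 + 6 * y ^ 2 + 1) * Real.log (1 + y ^ 2)) / (2 * y * (1 + y ^ 2))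
        + 2 * y * (y ^ 2 - 1) * Ii y / (1 + y ^ 2) ^ 2
        + y * (7 * y ^ 2 + 1) / (2 * (1 + y ^ 2) ^ 2)) / y) y := by
  have hy0 : y ≠ 0 := hy.ne'
  have hden : 2 * y * (1 + y ^ 2) ≠ 0 := by positivity
  have h1 : HasDerivAt (fun y : ℝ => 1 + y ^ 2) (2 * y) y := by
    simpa using (hasDerivAt_pow 2 y).const_add 1
  have hlog : HasDerivAt (fun y : ℝ => Real.log (1 + y ^ 2)) ((1 + y ^ 2)⁻¹ * (2 * y)) y :=
    (Real.hasDerivAt_log (by positivity)).comp y h1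
  have hI := hasDerivI hy
  have ha : HasDerivAt (fun y : ℝ => 1 - y ^ 4) (-(4 * y ^ 3)) y := by
    simpa using (hasDerivAt_pow 4 y).const_sub 1
  have hA := ha.mul hlog
  have hB : HasDerivAt (fun y : ℝ => 2 * y ^ 4) (2 * (4 * y ^ 3)) y := by
    simpa using (hasDerivAt_pow 4 y).const_mul 2
  have hC : HasDerivAt (fun y : ℝ => y ^ 2) (2 * y) y := by
    simpa using hasDerivAt_pow 2 y
  have hd : HasDerivAt (fun y : ℝ => 4 * y ^ 2) (4 * (2 * y)) y := by
    simpa using (hasDerivAt_pow 2 y).const_mul 4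
  have hD4 := hd.mul hI
  have hN := ((hA.add hB).sub hC).sub hD4
  have hDen : HasDerivAt (fun y : ℝ => 2 * y * (1 + y ^ 2))
      (2 * 1 * (1 + y ^ 2) + 2 * y * (2 * y)) y :=
    ((hasDerivAt_id y).const_mul 2).mul h1
  have hT := hN.div hDen hden
  have hfun : T1 = fun y : ℝ =>
      ((1 - y ^ 4) * Real.log (1 + y ^ 2) + 2 * y ^ 4 - y ^ 2 - 4 * y ^ 2 * Ii y)
        / (2 * y * (1 + y ^ 2)) := rfl
  rw [hfun]
  convert hT using 1
  have hne : (1 : ℝ) + y ^ 2 ≠ 0 := by positivity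
  all_goals try rfl
  simp only [Pi.mul_apply, Pi.add_apply, Pi.sub_apply]
  field_simp
  ring

lemma lamT1_eq {y : ℝ} (hy : 0 < y) :
    LamT1 y = -((y ^ 4 + 6 * y ^ 2 + 1) * Real.log (1 + y ^ 2)) / (2 * y * (1 + y ^ 2))
        + 2 * y * (y ^ 2 - 1) * Ii y / (1 + y ^ 2) ^ 2
        + y * (7 * y ^ 2 + 1) / (2 * (1 + y ^ 2) ^ 2) := by
  have h := (hasDerivT1 hy).deriv
  show y * deriv T1 y = _
  rw [h, mul_div_cancel₀ _ hy.ne']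

lemma T1_eq (y : ℝ) : T1 y =
    ((1 - y ^ 4) * Real.log (1 + y ^ 2) + 2 * y ^ 4 - y ^ 2 - 4 * y ^ 2 * Ii y)
      / (2 * y * (1 + y ^ 2)) := rfl

lemma log_split {y : ℝ} (hy : 0 < y) :
    Real.log (1 + y ^ 2) = 2 * Real.log y + Real.log (1 + 1 / y ^ 2) := by
  have h : (1 : ℝ) + y ^ 2 = y ^ 2 * (1 + 1 / y ^ 2) := by
    field_simp
    ring
  rw [h, Real.log_mul (by positivity) (by positivity), Real.log_pow]
  push_cast; ring

lemma log_ge_one {y : ℝ} (hy : 3 ≤ y) : 1 ≤ Real.log y := by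
  have h3 : Real.exp 1 ≤ y := by
    have := Real.exp_one_lt_d9; linarith
  calc (1:ℝ) = Real.log (Real.exp 1) := (Real.log_exp 1).symm
    _ ≤ Real.log y := Real.log_le_log (Real.exp_pos 1) h3

set_option maxHeartbeats 2000000 in
lemma bound1 {y : ℝ} (hy : 3 ≤ y) :
    |LamT1 y + y * Real.log y| ≤ 16 * ((Real.log y) ^ 2 / y) := by
  have hy0 : (0:ℝ) < y := by linarith
  have hy1 : (1:ℝ) ≤ y := by linarith
  have hly1 : 1 ≤ Real.log y := log_ge_one hy
  have he10 : 0 ≤ Real.log (1 + 1 / y ^ 2) := Real.log_nonneg (by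
    have : (0:ℝ) ≤ 1 / y ^ 2 := by positivity
    linarith)
  have he1c : Real.log (1 + 1 / y ^ 2) * y ^ 2 ≤ 1 := by
    have hb : Real.log (1 + 1 / y ^ 2) ≤ 1 / y ^ 2 := by
      have := Real.log_le_sub_one_of_pos (show (0:ℝ) < 1 + 1 / y ^ 2 by positivity)
      linarith
    exact (le_div_iff₀ (by positivity : (0:ℝ) < y ^ 2)).mp hb
  have hI0 : 0 ≤ Ii y := Ii_nonneg hy1
  have hIub : Ii y ≤ (Real.log y) ^ 2 + Real.log y := Ii_le hy1
  have hXeq : LamT1 y + y * Real.log y =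
      (-2 * (1 + y ^ 2) * (5 * y ^ 2 + 1) * Real.log y
        - (y ^ 4 + 6 * y ^ 2 + 1) * (1 + y ^ 2) * Real.log (1 + 1 / y ^ 2)
        + 4 * y ^ 2 * (y ^ 2 - 1) * Ii y + y ^ 2 * (7 * y ^ 2 + 1))
      / (2 * y * (1 + y ^ 2) ^ 2) := by
    rw [lamT1_eq hy0, log_split hy0]
    obtain ⟨e1, he1⟩ : ∃ e, Real.log (1 + 1 / y ^ 2) = e := ⟨_, rfl⟩
    obtain ⟨Iv, hIv⟩ : ∃ v, Ii y = v := ⟨_, rfl⟩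
    obtain ⟨ly, hly⟩ : ∃ l, Real.log y = l := ⟨_, rfl⟩
    rw [he1, hIv, hly]
    field_simp
    ring
  -- now work with opaque names
  obtain ⟨e1, he1⟩ : ∃ e, Real.log (1 + 1 / y ^ 2) = e := ⟨_, rfl⟩
  obtain ⟨Iv, hIv⟩ : ∃ v, Ii y = v := ⟨_, rfl⟩
  obtain ⟨ly, hly⟩ : ∃ l, Real.log y = l := ⟨_, rfl⟩
  rw [he1] at he10 he1c hXeq
  rw [hIv] at hI0 hIub hXeq
  rw [hly] at hly1 hIub hXeq ⊢
  have hly0 : (0:ℝ) ≤ ly := by linarith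
  rw [hXeq, abs_div, abs_of_pos (show (0:ℝ) < 2 * y * (1 + y ^ 2) ^ 2 by positivity),
    div_le_iff₀ (by positivity)]
  have hgoal : 16 * (ly ^ 2 / y) * (2 * y * (1 + y ^ 2) ^ 2)
      = 32 * ly ^ 2 * (1 + y ^ 2) ^ 2 := by
    field_simp; ring
  rw [hgoal, abs_le]
  have hcoef : (0:ℝ) ≤ 4 * y ^ 2 * (y ^ 2 - 1) := by
    nlinarith [mul_nonneg (show (0:ℝ) ≤ y - 1 by linarith) (show (0:ℝ) ≤ y + 1 by linarith),
      sq_nonneg y]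
  have hIprod : 4 * y ^ 2 * (y ^ 2 - 1) * Iv ≤ 4 * y ^ 2 * (y ^ 2 - 1) * (ly ^ 2 + ly) :=
    mul_le_mul_of_nonneg_left hIub hcoef
  have e1a : (y ^ 4 + 6 * y ^ 2 + 1) * e1 ≤ y ^ 2 + 7 := by
    nlinarith [mul_nonneg he10 (show (0:ℝ) ≤ y ^ 2 - 1 by nlinarith),
      mul_le_mul_of_nonneg_left he1c (show (0:ℝ) ≤ y ^ 2 + 7 by positivity)]
  have he1term : (1 + y ^ 2) * ((y ^ 4 + 6 * y ^ 2 + 1) * e1) ≤ (1 + y ^ 2) * (y ^ 2 + 7) :=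
    mul_le_mul_of_nonneg_left e1a (by positivity)
  constructor
  · -- lower bound
    have hkey : (10 * y ^ 2 + 2) * ly + y ^ 2 + 7 ≤ 32 * ly ^ 2 * (1 + y ^ 2) := by
      nlinarith [mul_nonneg (mul_nonneg (show (0:ℝ) ≤ y ^ 2 by positivity) hly0)
          (show (0:ℝ) ≤ ly - 1 by linarith),
        mul_nonneg hly0 (show (0:ℝ) ≤ ly - 1 by linarith),
        mul_nonneg (show (0:ℝ) ≤ y ^ 2 by positivity)
          (show (0:ℝ) ≤ ly ^ 2 - 1 by nlinarith)]
    have hkey2 : (1 + y ^ 2) * ((10 * y ^ 2 + 2) * ly + y ^ 2 + 7)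
        ≤ (1 + y ^ 2) * (32 * ly ^ 2 * (1 + y ^ 2)) :=
      mul_le_mul_of_nonneg_left hkey (by positivity)
    linarith [hkey2, he1term, mul_nonneg hcoef hI0,
      mul_nonneg (show (0:ℝ) ≤ y ^ 2 by positivity) (show (0:ℝ) ≤ 7 * y ^ 2 + 1 by positivity)]
  · -- upper bound
    have he1pos : 0 ≤ (y ^ 4 + 6 * y ^ 2 + 1) * (1 + y ^ 2) * e1 := by positivity
    have hlypos : 0 ≤ 2 * (1 + y ^ 2) * (5 * y ^ 2 + 1) * ly := by positivity
    have hlysq : ly ≤ ly ^ 2 := by nlinarith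
    have hA2 : 4 * y ^ 4 * ly ≤ 4 * y ^ 4 * ly ^ 2 :=
      mul_le_mul_of_nonneg_left hlysq (by positivity)
    have hB2 : 8 * y ^ 4 ≤ 8 * y ^ 4 * ly ^ 2 := by
      nlinarith [mul_nonneg (show (0:ℝ) ≤ 8 * y ^ 4 by positivity)
        (show (0:ℝ) ≤ ly ^ 2 - 1 by nlinarith)]
    have hC2 : 16 * y ^ 4 * ly ^ 2 ≤ 32 * ly ^ 2 * (1 + y ^ 2) ^ 2 := by
      nlinarith [mul_nonneg (mul_nonneg hly0 hly0)
        (show (0:ℝ) ≤ 16 * y ^ 4 + 64 * y ^ 2 + 32 by positivity)]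
    have hD2 : y ^ 2 ≤ y ^ 4 := by
      nlinarith [mul_nonneg (mul_nonneg (show (0:ℝ) ≤ y - 1 by linarith)
        (show (0:ℝ) ≤ y + 1 by linarith)) (sq_nonneg y)]
    linarith [hIprod, hA2, hB2, hC2, hD2, he1pos, hlypos,
      mul_nonneg (show (0:ℝ) ≤ 4 * y ^ 2 by positivity) hly0,
      mul_nonneg (show (0:ℝ) ≤ 4 * y ^ 2 by positivity) (mul_nonneg hly0 hly0)]

set_option maxHeartbeats 2000000 in
lemma bound2 {y : ℝ} (hy : 3 ≤ y) :
    |LamT1 y - T1 y + y| ≤ 16 * ((Real.log y) ^ 2 / y) := by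
  have hy0 : (0:ℝ) < y := by linarith
  have hy1 : (1:ℝ) ≤ y := by linarith
  have hly1 : 1 ≤ Real.log y := log_ge_one hy
  have he10 : 0 ≤ Real.log (1 + 1 / y ^ 2) := Real.log_nonneg (by
    have : (0:ℝ) ≤ 1 / y ^ 2 := by positivity
    linarith)
  have he1c : Real.log (1 + 1 / y ^ 2) * y ^ 2 ≤ 1 := by
    have hb : Real.log (1 + 1 / y ^ 2) ≤ 1 / y ^ 2 := by
      have := Real.log_le_sub_one_of_pos (show (0:ℝ) < 1 + 1 / y ^ 2 by positivity)
      linarith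
    exact (le_div_iff₀ (by positivity : (0:ℝ) < y ^ 2)).mp hb
  have hI0 : 0 ≤ Ii y := Ii_nonneg hy1
  have hIub : Ii y ≤ (Real.log y) ^ 2 + Real.log y := Ii_le hy1
  have hXeq : LamT1 y - T1 y + y =
      (-2 * (3 * y ^ 2 + 1) * (1 + y ^ 2) * Real.log y
        - (3 * y ^ 2 + 1) * (1 + y ^ 2) * Real.log (1 + 1 / y ^ 2)
        + 4 * y ^ 4 * Ii y + 5 * y ^ 4 + 2 * y ^ 2)
      / (y * (1 + y ^ 2) ^ 2) := by
    rw [lamT1_eq hy0, T1_eq, log_split hy0]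
    obtain ⟨e1, he1⟩ : ∃ e, Real.log (1 + 1 / y ^ 2) = e := ⟨_, rfl⟩
    obtain ⟨Iv, hIv⟩ : ∃ v, Ii y = v := ⟨_, rfl⟩
    obtain ⟨ly, hly⟩ : ∃ l, Real.log y = l := ⟨_, rfl⟩
    rw [he1, hIv, hly]
    field_simp
    ring
  obtain ⟨e1, he1⟩ : ∃ e, Real.log (1 + 1 / y ^ 2) = e := ⟨_, rfl⟩
  obtain ⟨Iv, hIv⟩ : ∃ v, Ii y = v := ⟨_, rfl⟩
  obtain ⟨ly, hly⟩ : ∃ l, Real.log y = l := ⟨_, rfl⟩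
  rw [he1] at he10 he1c hXeq
  rw [hIv] at hI0 hIub hXeq
  rw [hly] at hly1 hIub hXeq ⊢
  have hly0 : (0:ℝ) ≤ ly := by linarith
  rw [hXeq, abs_div, abs_of_pos (show (0:ℝ) < y * (1 + y ^ 2) ^ 2 by positivity),
    div_le_iff₀ (by positivity)]
  have hgoal : 16 * (ly ^ 2 / y) * (y * (1 + y ^ 2) ^ 2)
      = 16 * ly ^ 2 * (1 + y ^ 2) ^ 2 := by
    field_simp
  rw [hgoal, abs_le]
  have hIprod : 4 * y ^ 4 * Iv ≤ 4 * y ^ 4 * (ly ^ 2 + ly) :=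
    mul_le_mul_of_nonneg_left hIub (by positivity)
  have e1b : (3 * y ^ 2 + 1) * e1 ≤ 4 := by
    nlinarith [mul_nonneg he10 (show (0:ℝ) ≤ y ^ 2 - 1 by nlinarith)]
  have he1term : (1 + y ^ 2) * ((3 * y ^ 2 + 1) * e1) ≤ (1 + y ^ 2) * 4 :=
    mul_le_mul_of_nonneg_left e1b (by positivity)
  constructor
  · -- lower bound
    have hkey : (6 * y ^ 2 + 2) * ly + 4 ≤ 16 * ly ^ 2 * (1 + y ^ 2) := by
      nlinarith [mul_nonneg (mul_nonneg (show (0:ℝ) ≤ y ^ 2 by positivity) hly0)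
          (show (0:ℝ) ≤ ly - 1 by linarith),
        mul_nonneg hly0 (show (0:ℝ) ≤ ly - 1 by linarith),
        mul_nonneg (show (0:ℝ) ≤ y ^ 2 by positivity)
          (show (0:ℝ) ≤ ly ^ 2 - 1 by nlinarith)]
    have hkey2 : (1 + y ^ 2) * ((6 * y ^ 2 + 2) * ly + 4)
        ≤ (1 + y ^ 2) * (16 * ly ^ 2 * (1 + y ^ 2)) :=
      mul_le_mul_of_nonneg_left hkey (by positivity)
    linarith [hkey2, he1term, mul_nonneg (show (0:ℝ) ≤ 4 * y ^ 4 by positivity) hI0,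
      pow_nonneg hy0.le 4, pow_nonneg hy0.le 2]
  · -- upper bound
    have he1pos : 0 ≤ (3 * y ^ 2 + 1) * (1 + y ^ 2) * e1 := by positivity
    have hlypos : 0 ≤ 2 * (3 * y ^ 2 + 1) * (1 + y ^ 2) * ly := by positivity
    have hlysq : ly ≤ ly ^ 2 := by nlinarith
    have hA2 : 4 * y ^ 4 * ly ≤ 4 * y ^ 4 * ly ^ 2 :=
      mul_le_mul_of_nonneg_left hlysq (by positivity)
    have hB2 : 7 * y ^ 4 ≤ 7 * y ^ 4 * ly ^ 2 := by
      nlinarith [mul_nonneg (show (0:ℝ) ≤ 7 * y ^ 4 by positivity)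
        (show (0:ℝ) ≤ ly ^ 2 - 1 by nlinarith)]
    have hC2 : 15 * y ^ 4 * ly ^ 2 ≤ 16 * ly ^ 2 * (1 + y ^ 2) ^ 2 := by
      nlinarith [mul_nonneg (mul_nonneg hly0 hly0)
        (show (0:ℝ) ≤ y ^ 4 + 32 * y ^ 2 + 16 by positivity)]
    have hD2 : y ^ 2 ≤ y ^ 4 := by
      nlinarith [mul_nonneg (mul_nonneg (show (0:ℝ) ≤ y - 1 by linarith)
        (show (0:ℝ) ≤ y + 1 by linarith)) (sq_nonneg y)]
    linarith [hIprod, hA2, hB2, hC2, hD2, he1pos, hlypos]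

/-- Asymptotics as `y → +∞`: `ΛT₁(y) = -y log y + O((log y)²/y)` and
`ΛT₁(y) - T₁(y) = -y + O((log y)²/y)`. -/
theorem LamT1_asymptotics :
    ((fun y => LamT1 y + y * Real.log y) =O[atTop]
        fun y => (Real.log y) ^ 2 / y) ∧
    ((fun y => LamT1 y - T1 y + y) =O[atTop]
        fun y => (Real.log y) ^ 2 / y) := by
  constructor
  · rw [isBigO_iff]
    refine ⟨16, ?_⟩
    filter_upwards [eventually_ge_atTop (3:ℝ)] with y hy
    have hy0 : (0:ℝ) < y := by linarith
    rw [Real.norm_eq_abs, Real.norm_eq_abs,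
      abs_of_nonneg (by positivity : (0:ℝ) ≤ Real.log y ^ 2 / y)]
    exact bound1 hy
  · rw [isBigO_iff]
    refine ⟨16, ?_⟩
    filter_upwards [eventually_ge_atTop (3:ℝ)] with y hy
    have hy0 : (0:ℝ) < y := by linarith
    rw [Real.norm_eq_abs, Real.norm_eq_abs,
      abs_of_nonneg (by positivity : (0:ℝ) ≤ Real.log y ^ 2 / y)]
    exact bound2 hy

end
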